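/- Under the general setup, suppose condition (I⁰_ρ)* holds for some ρ > 0 and some i ∈ {1,2}. Then for every (u,v) in the boundary of V_ρ relative to K and every real μ ≥ 0, one has (u,v) ≠ T(u,v) + μ·(e,e), where e denotes the constant function 1 on [0,1]. (This is the key property from which the paper deduces that the fixed point index of T on V_ρ equals 0.) -/

import Mathlib

open MeasureTheory Set Filter

noncomputable section

/-- The sup norm `‖w‖∞ = sup {|w(t)| : t ∈ [0,1]}`. -/
def supN (w : ℝ → ℝ) : ℝ := sSup ((fun t => |w t|) '' Icc (0:ℝ) 1)

/-- The minimum `min {w(t) : t ∈ [a,b]}`. -/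
def minOnIcc (w : ℝ → ℝ) (a b : ℝ) : ℝ := sInf (w '' Icc a b)

/-- The general setup of Infante–Pietramala, "Multiple positive solutions of systems with
coupled nonlinear BCs".  Indices `i, j ∈ {1,2}` of the paper correspond to `0, 1 : Fin 2`. -/
structure Setup where
  f : Fin 2 → ℝ → ℝ → ℝ → ℝ
  k : Fin 2 → ℝ → ℝ → ℝ
  g : Fin 2 → ℝ → ℝ
  a : Fin 2 → ℝ
  b : Fin 2 → ℝ
  Φ : Fin 2 → ℝ → ℝ
  c : Fin 2 → ℝ
  B : Fin 2 → Fin 2 → Measure ℝ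
  C : Fin 2 → Fin 2 → Measure ℝ
  H : Fin 2 → Fin 2 → ℝ → ℝ
  L : Fin 2 → Fin 2 → ℝ → ℝ
  h1 : Fin 2 → Fin 2 → ℝ
  h2 : Fin 2 → Fin 2 → ℝ
  l2 : Fin 2 → Fin 2 → ℝ
  γ : Fin 2 → Fin 2 → ℝ → ℝ
  cγ : Fin 2 → Fin 2 → ℝ
  -- the nonlinearities fᵢ : [0,1] × [0,∞)² → [0,∞) satisfy Carathéodory conditions
  f_nonneg : ∀ i, ∀ t ∈ Icc (0:ℝ) 1, ∀ u, 0 ≤ u → ∀ v, 0 ≤ v → 0 ≤ f i t u v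
  f_meas : ∀ i u v, Measurable fun t => f i t u v
  f_cont : ∀ i, ∀ᵐ t ∂(volume.restrict (Icc (0:ℝ) 1)),
      ContinuousOn (fun p : ℝ × ℝ => f i t p.1 p.2) (Ici 0 ×ˢ Ici 0)
  f_bdd : ∀ i, ∀ r > (0:ℝ), ∃ φ : ℝ → ℝ, MemLp φ ⊤ (volume.restrict (Icc (0:ℝ) 1)) ∧
      ∀ᵐ t ∂(volume.restrict (Icc (0:ℝ) 1)), ∀ u ∈ Icc (0:ℝ) r, ∀ v ∈ Icc (0:ℝ) r,
        f i t u v ≤ φ t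
  -- the kernels
  k_nonneg : ∀ i, ∀ t ∈ Icc (0:ℝ) 1, ∀ s ∈ Icc (0:ℝ) 1, 0 ≤ k i t s
  k_meas : ∀ i, Measurable (Function.uncurry (k i))
  k_cont : ∀ i, ∀ τ ∈ Icc (0:ℝ) 1, ∀ᵐ s ∂(volume.restrict (Icc (0:ℝ) 1)),
      Tendsto (fun t => |k i t s - k i τ s|) (nhds τ) (nhds 0)
  -- the subintervals [aᵢ,bᵢ] ⊆ [0,1], the functions Φᵢ and the constants cᵢ ∈ (0,1]
  ab_mem : ∀ i, 0 ≤ a i ∧ a i ≤ b i ∧ b i ≤ 1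
  Φ_mem : ∀ i, MemLp (Φ i) ⊤ (volume.restrict (Icc (0:ℝ) 1))
  c_mem : ∀ i, c i ∈ Ioc (0:ℝ) 1
  k_le : ∀ i, ∀ t ∈ Icc (0:ℝ) 1, ∀ᵐ s ∂(volume.restrict (Icc (0:ℝ) 1)), k i t s ≤ Φ i s
  k_ge : ∀ i, ∀ t ∈ Icc (a i) (b i), ∀ᵐ s ∂(volume.restrict (Icc (0:ℝ) 1)),
      c i * Φ i s ≤ k i t s
  -- the weights gᵢ
  g_meas : ∀ i, Measurable (g i)
  g_nonneg : ∀ i, ∀ᵐ s ∂(volume.restrict (Icc (0:ℝ) 1)), 0 ≤ g i s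
  gΦ_int : ∀ i, IntegrableOn (fun s => g i s * Φ i s) (Icc (0:ℝ) 1)
  gΦ_pos : ∀ i, 0 < ∫ s in Icc (a i) (b i), Φ i s * g i s
  -- the Stieltjes measures defining the functionals β and δ
  B_fin : ∀ i j, IsFiniteMeasure (B i j)
  C_fin : ∀ i j, IsFiniteMeasure (C i j)
  B_supp : ∀ i j, B i j (Icc (0:ℝ) 1)ᶜ = 0
  C_supp : ∀ i j, C i j (Icc (0:ℝ) 1)ᶜ = 0
  -- the nonlinear boundary functions H, L with their linear bounds
  H_cont : ∀ i j, ContinuousOn (H i j) (Ici 0)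
  L_cont : ∀ i j, ContinuousOn (L i j) (Ici 0)
  H_nonneg : ∀ i j w, 0 ≤ w → 0 ≤ H i j w
  L_nonneg : ∀ i j w, 0 ≤ w → 0 ≤ L i j w
  h1_nonneg : ∀ i j, 0 ≤ h1 i j
  h2_nonneg : ∀ i j, 0 ≤ h2 i j
  l2_nonneg : ∀ i j, 0 ≤ l2 i j
  H_bound_lower : ∀ i j w, 0 ≤ w → h1 i j * w ≤ H i j w
  H_bound_upper : ∀ i j w, 0 ≤ w → H i j w ≤ h2 i j * w
  L_bound : ∀ i j w, 0 ≤ w → L i j w ≤ l2 i j * w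
  -- the functions γᵢⱼ
  γ_cont : ∀ i j, ContinuousOn (γ i j) (Icc (0:ℝ) 1)
  γ_nonneg : ∀ i j, ∀ t ∈ Icc (0:ℝ) 1, 0 ≤ γ i j t
  hβγ : ∀ i j, h2 i j * ∫ s, γ i j s ∂(B i j) < 1
  cγ_mem : ∀ i j, cγ i j ∈ Ioc (0:ℝ) 1
  γ_ge : ∀ i j, ∀ t ∈ Icc (a i) (b i), cγ i j * supN (γ i j) ≤ γ i j t
  -- positivity of the determinants Dᵢ
  D_pos : ∀ i,
      0 < (1 - h2 i 0 * ∫ s, γ i 0 s ∂(B i 0)) * (1 - h2 i 1 * ∫ s, γ i 1 s ∂(B i 1))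
        - h2 i 0 * h2 i 1 * (∫ s, γ i 1 s ∂(B i 0)) * (∫ s, γ i 0 s ∂(B i 1))

namespace Setup

variable (S : Setup)

/-- The functionals `β_{ij}[w] = ∫₀¹ w dB_{ij}`. -/
def β (i j : Fin 2) (w : ℝ → ℝ) : ℝ := ∫ s, w s ∂(S.B i j)

/-- The functionals `δ_{ij}[w] = ∫₀¹ w dC_{ij}`. -/
def δ (i j : Fin 2) (w : ℝ → ℝ) : ℝ := ∫ s, w s ∂(S.C i j)

/-- The Hammerstein integral operators `Fᵢ`. -/
def F (i : Fin 2) (u v : ℝ → ℝ) (t : ℝ) : ℝ :=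
  ∫ s in Icc (0:ℝ) 1, S.k i t s * S.g i s * S.f i s (u s) (v s)

/-- First component of the operator `T`. -/
def T1 (u v : ℝ → ℝ) (t : ℝ) : ℝ :=
  S.γ 0 0 t * (S.H 0 0 (S.β 0 0 u) + S.L 0 0 (S.δ 0 0 v))
    + S.γ 0 1 t * (S.H 0 1 (S.β 0 1 u) + S.L 0 1 (S.δ 0 1 v))
    + S.F 0 u v t

/-- Second component of the operator `T`. -/
def T2 (u v : ℝ → ℝ) (t : ℝ) : ℝ :=
  S.γ 1 0 t * (S.L 1 0 (S.δ 1 0 u) + S.H 1 0 (S.β 1 0 v))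
    + S.γ 1 1 t * (S.L 1 1 (S.δ 1 1 u) + S.H 1 1 (S.β 1 1 v))
    + S.F 1 u v t

/-- The constants `c̃ᵢ = min{cᵢ, c_{i1}, c_{i2}}`. -/
def ctilde (i : Fin 2) : ℝ := min (S.c i) (min (S.cγ i 0) (S.cγ i 1))

/-- The constant `c = min{c̃₁, c̃₂}`. -/
def cc : ℝ := min (S.ctilde 0) (S.ctilde 1)

/-- Membership of `(u,v)` in the cone `K = K̃₁ × K̃₂`. -/
def inK (u v : ℝ → ℝ) : Prop :=
  ContinuousOn u (Icc (0:ℝ) 1) ∧ ContinuousOn v (Icc (0:ℝ) 1) ∧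
  (∀ t ∈ Icc (0:ℝ) 1, 0 ≤ u t) ∧ (∀ t ∈ Icc (0:ℝ) 1, 0 ≤ v t) ∧
  S.ctilde 0 * supN u ≤ minOnIcc u (S.a 0) (S.b 0) ∧
  S.ctilde 1 * supN v ≤ minOnIcc v (S.a 1) (S.b 1)

/-- `𝒦_{ij}(s) = ∫₀¹ kᵢ(t,s) dB_{ij}(t)`. -/
def KK (i j : Fin 2) (s : ℝ) : ℝ := ∫ t, S.k i t s ∂(S.B i j)

/-- `Qᵢ = Σ_l β_{i1}[γ_{il}] l_{il2} δ_{il}[1]`. -/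
def Q (i : Fin 2) : ℝ := ∑ l, S.β i 0 (S.γ i l) * S.l2 i l * S.δ i l (fun _ => 1)

/-- `Sᵢ = Σ_l β_{i2}[γ_{il}] l_{il2} δ_{il}[1]`. -/
def Sq (i : Fin 2) : ℝ := ∑ l, S.β i 1 (S.γ i l) * S.l2 i l * S.δ i l (fun _ => 1)

/-- The determinant `Dᵢ`. -/
def D (i : Fin 2) : ℝ :=
  (1 - S.h2 i 0 * S.β i 0 (S.γ i 0)) * (1 - S.h2 i 1 * S.β i 1 (S.γ i 1))
    - S.h2 i 0 * S.h2 i 1 * S.β i 0 (S.γ i 1) * S.β i 1 (S.γ i 0)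

/-- The determinant `𝐷̲ᵢ` (with the lower constants `h_{ij1}`). -/
def Dl (i : Fin 2) : ℝ :=
  (1 - S.h1 i 0 * S.β i 0 (S.γ i 0)) * (1 - S.h1 i 1 * S.β i 1 (S.γ i 1))
    - S.h1 i 0 * S.h1 i 1 * S.β i 0 (S.γ i 1) * S.β i 1 (S.γ i 0)

def θ1 (i : Fin 2) : ℝ := (1 - S.h2 i 1 * S.β i 1 (S.γ i 1)) / S.D i
def θ2 (i : Fin 2) : ℝ := S.h2 i 1 * S.β i 0 (S.γ i 1) / S.D i
def θ3 (i : Fin 2) : ℝ := S.h2 i 0 * S.β i 1 (S.γ i 0) / S.D i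
def θ4 (i : Fin 2) : ℝ := (1 - S.h2 i 0 * S.β i 0 (S.γ i 0)) / S.D i

/-- `1/mᵢ = sup_{t ∈ [0,1]} ∫₀¹ kᵢ(t,s)gᵢ(s) ds`. -/
def mInv (i : Fin 2) : ℝ :=
  sSup ((fun t => ∫ s in Icc (0:ℝ) 1, S.k i t s * S.g i s) '' Icc (0:ℝ) 1)

/-- `1/Mᵢ = inf_{t ∈ [aᵢ,bᵢ]} ∫_{aᵢ}^{bᵢ} kᵢ(t,s)gᵢ(s) ds`. -/
def MInv (i : Fin 2) : ℝ :=
  sInf ((fun t => ∫ s in Icc (S.a i) (S.b i), S.k i t s * S.g i s) '' Icc (S.a i) (S.b i))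

/-- `fᵢ^{0,ρ} = sup{fᵢ(t,u,v)/ρ : t ∈ [0,1], u,v ∈ [0,ρ]}`. -/
def fSup (i : Fin 2) (ρ : ℝ) : ℝ :=
  sSup {x | ∃ t ∈ Icc (0:ℝ) 1, ∃ u ∈ Icc (0:ℝ) ρ, ∃ v ∈ Icc (0:ℝ) ρ, x = S.f i t u v / ρ}

/-- `f_{1,(ρ,ρ/c)}`. -/
def fInf1 (ρ : ℝ) : ℝ :=
  sInf {x | ∃ t ∈ Icc (S.a 0) (S.b 0), ∃ u ∈ Icc ρ (ρ / S.cc), ∃ v ∈ Icc (0:ℝ) (ρ / S.cc),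
    x = S.f 0 t u v / ρ}

/-- `f_{2,(ρ,ρ/c)}`. -/
def fInf2 (ρ : ℝ) : ℝ :=
  sInf {x | ∃ t ∈ Icc (S.a 1) (S.b 1), ∃ u ∈ Icc (0:ℝ) (ρ / S.cc), ∃ v ∈ Icc ρ (ρ / S.cc),
    x = S.f 1 t u v / ρ}

def fInf (i : Fin 2) (ρ : ℝ) : ℝ := if i = 0 then S.fInf1 ρ else S.fInf2 ρ

/-- `f*_{i,(0,ρ/c)}`. -/
def fInfStar (i : Fin 2) (ρ : ℝ) : ℝ :=
  sInf {x | ∃ t ∈ Icc (S.a i) (S.b i), ∃ u ∈ Icc (0:ℝ) (ρ / S.cc),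
    ∃ v ∈ Icc (0:ℝ) (ρ / S.cc), x = S.f i t u v / ρ}

/-- Condition `(I¹_ρ)`. -/
def CondI1 (ρ : ℝ) : Prop := ∀ i : Fin 2,
  S.fSup i ρ *
      ((supN (S.γ i 0) * S.h2 i 0 * S.θ1 i + supN (S.γ i 1) * S.h2 i 1 * S.θ3 i)
          * (∫ s in Icc (0:ℝ) 1, S.KK i 0 s * S.g i s)
        + (supN (S.γ i 0) * S.h2 i 0 * S.θ2 i + supN (S.γ i 1) * S.h2 i 1 * S.θ4 i)
          * (∫ s in Icc (0:ℝ) 1, S.KK i 1 s * S.g i s)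
        + S.mInv i)
    + supN (S.γ i 0) * S.h2 i 0 * (S.θ1 i * S.Q i + S.θ2 i * S.Sq i)
    + supN (S.γ i 1) * S.h2 i 1 * (S.θ3 i * S.Q i + S.θ4 i * S.Sq i)
    + (∑ j, supN (S.γ i j) * S.l2 i j * S.δ i j fun _ => 1) < 1

/-- The bracket appearing in conditions `(I⁰_ρ)` and `(I⁰_ρ)*`. -/
def Ψ (i : Fin 2) : ℝ :=
  (S.cγ i 0 * supN (S.γ i 0) * S.h1 i 0 / S.Dl i * (1 - S.h1 i 1 * S.β i 1 (S.γ i 1))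
      + S.cγ i 1 * supN (S.γ i 1) * S.h1 i 1 / S.Dl i * (S.h1 i 0 * S.β i 1 (S.γ i 0)))
    * (∫ s in Icc (S.a i) (S.b i), S.KK i 0 s * S.g i s)
  + (S.cγ i 0 * supN (S.γ i 0) * S.h1 i 0 / S.Dl i * (S.h1 i 1 * S.β i 0 (S.γ i 1))
      + S.cγ i 1 * supN (S.γ i 1) * S.h1 i 1 / S.Dl i * (1 - S.h1 i 0 * S.β i 0 (S.γ i 0)))
    * (∫ s in Icc (S.a i) (S.b i), S.KK i 1 s * S.g i s)
  + S.MInv i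

/-- Condition `(I⁰_ρ)`. -/
def CondI0 (ρ : ℝ) : Prop := ∀ i : Fin 2, 1 < S.fInf i ρ * S.Ψ i

/-- Condition `(I⁰_ρ)*`. -/
def CondI0Star (ρ : ℝ) : Prop := ∃ i : Fin 2, 1 < S.fInfStar i ρ * S.Ψ i

/-- `(u,v)` is a fixed point of `T` (as functions on `[0,1]`). -/
def IsFixedPt (u v : ℝ → ℝ) : Prop :=
  ∀ t ∈ Icc (0:ℝ) 1, S.T1 u v t = u t ∧ S.T2 u v t = v t

/-- `(u,v)` is a positive solution: a fixed point of `T` in `K` with `‖(u,v)‖ > 0`. -/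
def PosSol (u v : ℝ → ℝ) : Prop :=
  S.inK u v ∧ S.IsFixedPt u v ∧ 0 < max (supN u) (supN v)

/-- Two pairs are distinct as elements of `C[0,1] × C[0,1]`. -/
def Distinct (u₁ v₁ u₂ v₂ : ℝ → ℝ) : Prop :=
  ∃ t ∈ Icc (0:ℝ) 1, u₁ t ≠ u₂ t ∨ v₁ t ≠ v₂ t

end Setup


section Aux

open MeasureTheory
open scoped ENNReal NNReal

lemma le_supN {w : ℝ → ℝ} (hc : ContinuousOn w (Icc (0:ℝ) 1)) {t : ℝ}
    (ht : t ∈ Icc (0:ℝ) 1) : w t ≤ supN w := by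
  have hb : BddAbove ((fun t => |w t|) '' Icc (0:ℝ) 1) :=
    (isCompact_Icc.image_of_continuousOn hc.abs).bddAbove
  exact (le_abs_self _).trans (le_csSup hb ⟨t, ht, rfl⟩)

lemma integrable_of_B {B : Measure ℝ} [IsFiniteMeasure B] (hB : ∀ᵐ t ∂B, t ∈ Icc (0:ℝ) 1)
    {w : ℝ → ℝ} (hc : ContinuousOn w (Icc (0:ℝ) 1)) {Cw : ℝ}
    (hbd : ∀ t ∈ Icc (0:ℝ) 1, |w t| ≤ Cw) : Integrable w B := by
  have hrestr : B.restrict (Icc (0:ℝ) 1) = B := Measure.restrict_eq_self_of_ae_mem hB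
  refine ⟨hrestr ▸ hc.aestronglyMeasurable measurableSet_Icc,
    HasFiniteIntegral.of_bounded (C := Cw) ?_⟩
  filter_upwards [hB] with t ht
  simpa [Real.norm_eq_abs] using hbd t ht


lemma Dl_pos_alg {h1a h1b h2a h2b P Q R Sg : ℝ} (h12a : h1a ≤ h2a) (h12b : h1b ≤ h2b)
    (h1b0 : 0 ≤ h1b) (h2a0 : 0 ≤ h2a)
    (hP : 0 ≤ P) (hQ : 0 ≤ Q) (hR : 0 ≤ R) (hS : 0 ≤ Sg)
    (hdiag0 : h2a * P < 1) (hdiag1 : h2b * Sg < 1)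
    (hD : 0 < (1 - h2a * P) * (1 - h2b * Sg) - h2a * h2b * Q * R) :
    0 < (1 - h1a * P) * (1 - h1b * Sg) - h1a * h1b * Q * R := by
  have e1 : 1 - h2a * P ≤ 1 - h1a * P := by nlinarith
  have e2 : 1 - h2b * Sg ≤ 1 - h1b * Sg := by nlinarith
  have key1 : (1 - h2a * P) * (1 - h2b * Sg) ≤ (1 - h1a * P) * (1 - h1b * Sg) :=
    mul_le_mul e1 e2 (by linarith) (by linarith)
  have hhh : h1a * h1b ≤ h2a * h2b := mul_le_mul h12a h12b h1b0 h2a0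
  have key2 : h1a * h1b * (Q * R) ≤ h2a * h2b * (Q * R) :=
    mul_le_mul_of_nonneg_right hhh (mul_nonneg hQ hR)
  nlinarith [key1, key2]

lemma lin_solve0 {P Q R Sg ha hb X0 X1 A0 A1 : ℝ}
    (i0 : P * (ha * X0) + Q * (hb * X1) + A0 ≤ X0)
    (i1 : R * (ha * X0) + Sg * (hb * X1) + A1 ≤ X1)
    (hQ0 : 0 ≤ Q) (hb0 : 0 ≤ hb) (hdiag1 : hb * Sg < 1) :
    (1 - hb * Sg) * A0 + hb * Q * A1
      ≤ ((1 - ha * P) * (1 - hb * Sg) - ha * hb * Q * R) * X0 := by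
  nlinarith [mul_le_mul_of_nonneg_left i0 (le_of_lt (sub_pos.2 hdiag1)),
    mul_le_mul_of_nonneg_left i1 (mul_nonneg hb0 hQ0)]

lemma lin_solve1 {P Q R Sg ha hb X0 X1 A0 A1 : ℝ}
    (i0 : P * (ha * X0) + Q * (hb * X1) + A0 ≤ X0)
    (i1 : R * (ha * X0) + Sg * (hb * X1) + A1 ≤ X1)
    (hR0 : 0 ≤ R) (ha0 : 0 ≤ ha) (hdiag0 : ha * P < 1) :
    ha * R * A0 + (1 - ha * P) * A1
      ≤ ((1 - ha * P) * (1 - hb * Sg) - ha * hb * Q * R) * X1 := by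
  nlinarith [mul_le_mul_of_nonneg_left i1 (le_of_lt (sub_pos.2 hdiag0)),
    mul_le_mul_of_nonneg_left i0 (mul_nonneg ha0 hR0)]

lemma psi_id (cγ0 γ0 h1a cγ1 γ1 h1b DL Sg R Q P b0 b1 M ρ Fs : ℝ) (hDL : DL ≠ 0) :
    ρ * (Fs * ((cγ0 * γ0 * h1a / DL * (1 - h1b * Sg) + cγ1 * γ1 * h1b / DL * (h1a * R)) * b0
      + (cγ0 * γ0 * h1a / DL * (h1b * Q) + cγ1 * γ1 * h1b / DL * (1 - h1a * P)) * b1 + M)) * DL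
    = cγ0 * γ0 * h1a * ((1 - h1b * Sg) * (ρ * Fs * b0) + h1b * Q * (ρ * Fs * b1))
      + cγ1 * γ1 * h1b * (h1a * R * (ρ * Fs * b0) + (1 - h1a * P) * (ρ * Fs * b1))
      + ρ * Fs * M * DL := by
  field_simp
  ring

lemma final_step {K0 K1 X0 X1 M DL Z T0 T1 : ℝ} (hK0 : 0 ≤ K0) (hK1 : 0 ≤ K1)
    (h0 : T0 ≤ DL * X0) (h1 : T1 ≤ DL * X1) (hDL : 0 < DL)
    (hid : Z * DL = K0 * T0 + K1 * T1 + M * DL) :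
    Z ≤ K0 * X0 + K1 * X1 + M := by
  have h2 := mul_le_mul_of_nonneg_left h0 hK0
  have h3 := mul_le_mul_of_nonneg_left h1 hK1
  have h4 : Z * DL ≤ (K0 * X0 + K1 * X1 + M) * DL := by nlinarith
  exact le_of_mul_le_mul_right h4 hDL

lemma cc_pos (S : Setup) : 0 < S.cc := by
  have h0 := S.c_mem 0
  have h1 := S.c_mem 1
  have h2 := S.cγ_mem 0 0
  have h3 := S.cγ_mem 0 1
  have h4 := S.cγ_mem 1 0
  have h5 := S.cγ_mem 1 1
  simp only [Setup.cc, Setup.ctilde, lt_min_iff]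
  exact ⟨⟨h0.1, h2.1, h3.1⟩, ⟨h1.1, h4.1, h5.1⟩⟩

lemma ctilde_ge_cc (S : Setup) (i : Fin 2) : S.cc ≤ S.ctilde i := by
  fin_cases i
  · exact min_le_left _ _
  · exact min_le_right _ _

lemma key_lemma (S : Setup) (i : Fin 2) (ρ : ℝ) (hρ : 0 < ρ)
    (hstar : 1 < S.fInfStar i ρ * S.Ψ i)
    (u v w : ℝ → ℝ)
    (hw : w = u ∨ w = v)
    (hucont : ContinuousOn u (Icc (0:ℝ) 1)) (hvcont : ContinuousOn v (Icc (0:ℝ) 1))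
    (hu0 : ∀ t ∈ Icc (0:ℝ) 1, 0 ≤ u t) (hv0 : ∀ t ∈ Icc (0:ℝ) 1, 0 ≤ v t)
    (hub : ∀ t ∈ Icc (0:ℝ) 1, u t ≤ ρ / S.cc) (hvb : ∀ t ∈ Icc (0:ℝ) 1, v t ≤ ρ / S.cc)
    (r : Fin 2 → ℝ) (hr : ∀ l, 0 ≤ r l) (μ : ℝ) (hμ : 0 ≤ μ)
    (heq : ∀ t ∈ Icc (0:ℝ) 1, w t =
      S.γ i 0 t * (S.H i 0 (S.β i 0 w) + r 0) + S.γ i 1 t * (S.H i 1 (S.β i 1 w) + r 1)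
        + S.F i u v t + μ) :
    ρ < minOnIcc w (S.a i) (S.b i) := by
  classical
  obtain ⟨ha0, hab, hb1⟩ := S.ab_mem i
  have hsub : Icc (S.a i) (S.b i) ⊆ Icc (0:ℝ) 1 := Icc_subset_Icc ha0 hb1
  have hccpos : 0 < S.cc := cc_pos S
  have hρc : 0 < ρ / S.cc := div_pos hρ hccpos
  set ν := volume.restrict (Icc (0:ℝ) 1) with hν
  -- the w-versions of the hypotheses
  have hwcont : ContinuousOn w (Icc (0:ℝ) 1) := by rcases hw with rfl | rfl <;> assumption
  have hw0 : ∀ t ∈ Icc (0:ℝ) 1, 0 ≤ w t := by rcases hw with rfl | rfl <;> assumption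
  have hwb : ∀ t ∈ Icc (0:ℝ) 1, w t ≤ ρ / S.cc := by rcases hw with rfl | rfl <;> assumption
  -- facts about fInfStar
  set Fs := S.fInfStar i ρ with hFsdef
  have hSetbd : ∀ x ∈ {x | ∃ t ∈ Icc (S.a i) (S.b i), ∃ u' ∈ Icc (0:ℝ) (ρ / S.cc),
      ∃ v' ∈ Icc (0:ℝ) (ρ / S.cc), x = S.f i t u' v' / ρ}, (0:ℝ) ≤ x := by
    rintro x ⟨t, ht, u', hu', v', hv', rfl⟩
    exact div_nonneg (S.f_nonneg i t (hsub ht) u' hu'.1 v' hv'.1) hρ.le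
  have hFs0 : 0 ≤ Fs :=
    le_csInf ⟨S.f i (S.a i) 0 0 / ρ, S.a i, ⟨le_refl _, hab⟩, 0, ⟨le_refl 0, hρc.le⟩,
      0, ⟨le_refl 0, hρc.le⟩, rfl⟩ hSetbd
  have hfLB : ∀ s ∈ Icc (S.a i) (S.b i), ρ * Fs ≤ S.f i s (u s) (v s) := by
    intro s hs
    have h := csInf_le ⟨0, hSetbd⟩ (⟨s, hs, u s, ⟨hu0 s (hsub hs), hub s (hsub hs)⟩, v s,
      ⟨hv0 s (hsub hs), hvb s (hsub hs)⟩, rfl⟩ :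
        S.f i s (u s) (v s) / ρ ∈ {x | ∃ t ∈ Icc (S.a i) (S.b i), ∃ u' ∈ Icc (0:ℝ) (ρ / S.cc),
          ∃ v' ∈ Icc (0:ℝ) (ρ / S.cc), x = S.f i t u' v' / ρ})
    rw [hFsdef, Setup.fInfStar]
    rw [le_div_iff₀ hρ] at h
    linarith
  -- Carathéodory: a.e.-measurability of s ↦ f i s (u s) (v s)
  have hfc := S.f_cont i
  set Bad := {t : ℝ | ¬ ContinuousOn (fun p : ℝ × ℝ => S.f i t p.1 p.2) (Ici 0 ×ˢ Ici 0)}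
    with hBadDef
  have hBadnull : ν Bad = 0 := hfc
  set N := toMeasurable ν Bad with hNdef
  have hNmeas : MeasurableSet N := measurableSet_toMeasurable ν Bad
  have hNnull : ν N = 0 := by rw [hNdef, measure_toMeasurable]; exact hBadnull
  have hNsub : Bad ⊆ N := subset_toMeasurable ν Bad
  set g2 : ℝ × ℝ → ℝ → ℝ := fun p t => if t ∈ N then 0 else S.f i t (max p.1 0) (max p.2 0)
    with hg2
  have hg2meas : Measurable (Function.uncurry g2) := by
    apply measurable_uncurry_of_continuous_of_measurable
    · intro t
      by_cases htN : t ∈ N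
      · simpa [hg2, htN] using (continuous_const : Continuous fun _ : ℝ × ℝ => (0:ℝ))
      · have hcont : ContinuousOn (fun p : ℝ × ℝ => S.f i t p.1 p.2) (Ici 0 ×ˢ Ici 0) := by
          by_contra hc
          exact htN (hNsub hc)
        have hclamp : Continuous (fun p : ℝ × ℝ => ((max p.1 0 : ℝ), (max p.2 0 : ℝ))) := by
          fun_prop
        have hcc := hcont.comp_continuous hclamp
          (fun p => ⟨show (0:ℝ) ≤ max p.1 0 from le_max_right _ _, show (0:ℝ) ≤ max p.2 0 from le_max_right _ _⟩)
        simpa [hg2, htN, Function.comp_def] using hcc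
    · intro p
      exact Measurable.ite hNmeas measurable_const (S.f_meas i _ _)
  have huaem : AEMeasurable u ν := hucont.aemeasurable measurableSet_Icc
  have hvaem : AEMeasurable v ν := hvcont.aemeasurable measurableSet_Icc
  have hνmem : ∀ᵐ s ∂ν, s ∈ Icc (0:ℝ) 1 := ae_restrict_mem measurableSet_Icc
  have hνN : ∀ᵐ s ∂ν, s ∉ N := measure_eq_zero_iff_ae_notMem.mp hNnull
  have hfaem : AEMeasurable (fun s => S.f i s (u s) (v s)) ν := by
    have h1 : AEMeasurable (fun s => Function.uncurry g2 ((u s, v s), s)) ν :=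
      hg2meas.comp_aemeasurable (((huaem.prodMk hvaem)).prodMk aemeasurable_id)
    refine h1.congr ?_
    filter_upwards [hνmem, hνN] with s hs hsN
    simp only [Function.uncurry, hg2, if_neg hsN, max_eq_left (hu0 s hs),
      max_eq_left (hv0 s hs)]
  -- a.e. bound on f along (u, v)
  obtain ⟨φ, hφmem, hφbd⟩ := S.f_bdd i (ρ / S.cc) hρc
  set C := (eLpNormEssSup φ ν).toReal with hCdef
  have hC0 : 0 ≤ C := ENNReal.toReal_nonneg
  have hφtop : eLpNormEssSup φ ν ≠ ⊤ := by
    have h2 := hφmem.2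
    rw [eLpNorm_exponent_top] at h2
    exact h2.ne
  have hφC : ∀ᵐ s ∂ν, |φ s| ≤ C := by
    filter_upwards [ae_le_eLpNormEssSup (f := φ) (μ := ν)] with s hs
    have h2 := ENNReal.toReal_mono hφtop hs
    simpa [Real.norm_eq_abs] using h2
  have hfC : ∀ᵐ s ∂ν, 0 ≤ S.f i s (u s) (v s) ∧ S.f i s (u s) (v s) ≤ C := by
    filter_upwards [hφbd, hφC, hνmem] with s h1 h2 hs
    refine ⟨S.f_nonneg i s hs _ (hu0 s hs) _ (hv0 s hs), ?_⟩
    calc S.f i s (u s) (v s) ≤ φ s := h1 _ ⟨hu0 s hs, hub s hs⟩ _ ⟨hv0 s hs, hvb s hs⟩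
    _ ≤ |φ s| := le_abs_self _
    _ ≤ C := h2
  -- integrability of the integrands
  have hkmeas : ∀ t, Measurable (fun s => S.k i t s) := fun t =>
    (S.k_meas i).comp measurable_prodMk_left
  have hgmeas := S.g_meas i
  have hg0 : ∀ᵐ s ∂ν, 0 ≤ S.g i s := S.g_nonneg i
  have hIntF : ∀ t ∈ Icc (0:ℝ) 1,
      IntegrableOn (fun s => S.k i t s * S.g i s * S.f i s (u s) (v s)) (Icc (0:ℝ) 1) := by
    intro t ht
    have haesm : AEStronglyMeasurable
        (fun s => S.k i t s * S.g i s * S.f i s (u s) (v s)) ν :=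
      (((hkmeas t).aemeasurable.mul hgmeas.aemeasurable).mul hfaem).aestronglyMeasurable
    refine Integrable.mono' ((S.gΦ_int i).const_mul C) haesm ?_
    filter_upwards [S.k_le i t ht, hfC, hg0, hνmem] with s hk hf hg hs
    have hknn : 0 ≤ S.k i t s := S.k_nonneg i t ht s hs
    rw [Real.norm_eq_abs, abs_of_nonneg (mul_nonneg (mul_nonneg hknn hg) hf.1)]
    nlinarith [mul_nonneg (mul_nonneg (sub_nonneg.2 hk) hg) hf.1,
      mul_nonneg (mul_nonneg (hknn.trans hk) hg) (sub_nonneg.2 hf.2)]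
  have hIntkg : ∀ t ∈ Icc (0:ℝ) 1,
      IntegrableOn (fun s => S.k i t s * S.g i s) (Icc (0:ℝ) 1) := by
    intro t ht
    refine Integrable.mono' (S.gΦ_int i)
      ((hkmeas t).aemeasurable.mul hgmeas.aemeasurable).aestronglyMeasurable ?_
    filter_upwards [S.k_le i t ht, hg0, hνmem] with s hk hg hs
    have hknn : 0 ≤ S.k i t s := S.k_nonneg i t ht s hs
    rw [Real.norm_eq_abs, abs_of_nonneg (mul_nonneg hknn hg)]
    nlinarith [mul_le_mul_of_nonneg_right hk hg]
  -- the auxiliary function J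
  set J : ℝ → ℝ := fun t => ∫ s in Icc (S.a i) (S.b i), S.k i t s * S.g i s with hJdef
  have hg0ab : ∀ᵐ s ∂(volume.restrict (Icc (S.a i) (S.b i))), 0 ≤ S.g i s :=
    ae_restrict_of_ae_restrict_of_subset hsub hg0
  have hJnonneg : ∀ t ∈ Icc (0:ℝ) 1, 0 ≤ J t := by
    intro t ht
    refine integral_nonneg_of_ae ?_
    filter_upwards [hg0ab, ae_restrict_mem measurableSet_Icc] with s hg hs
    exact mul_nonneg (S.k_nonneg i t ht s (hsub hs)) hg
  have hFlow : ∀ t ∈ Icc (0:ℝ) 1, ρ * Fs * J t ≤ S.F i u v t := by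
    intro t ht
    have h1 : ∫ s in Icc (S.a i) (S.b i), S.k i t s * S.g i s * S.f i s (u s) (v s)
        ≤ S.F i u v t := by
      refine setIntegral_mono_set (hIntF t ht) ?_ (HasSubset.Subset.eventuallyLE hsub)
      filter_upwards [hfC, hg0, hνmem] with s hf hg hs
      exact mul_nonneg (mul_nonneg (S.k_nonneg i t ht s hs) hg) hf.1
    have h2 : ∫ s in Icc (S.a i) (S.b i), ρ * Fs * (S.k i t s * S.g i s)
        ≤ ∫ s in Icc (S.a i) (S.b i), S.k i t s * S.g i s * S.f i s (u s) (v s) := by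
      refine integral_mono_ae (((hIntkg t ht).mono_set hsub).const_mul _)
        ((hIntF t ht).mono_set hsub) ?_
      filter_upwards [hg0ab, ae_restrict_mem measurableSet_Icc] with s hg hs
      have hknn : 0 ≤ S.k i t s := S.k_nonneg i t ht s (hsub hs)
      have hf := hfLB s hs
      nlinarith [mul_le_mul_of_nonneg_left hf (mul_nonneg hknn hg)]
    have h3 : ∫ s in Icc (S.a i) (S.b i), ρ * Fs * (S.k i t s * S.g i s) = ρ * Fs * J t :=
      integral_const_mul _ _
    rw [← h3]
    exact h2.trans h1
  have hMInv : ∀ t ∈ Icc (S.a i) (S.b i), S.MInv i ≤ J t := by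
    intro t ht
    refine csInf_le ⟨0, ?_⟩ ⟨t, ht, rfl⟩
    rintro x ⟨t', ht', rfl⟩
    exact hJnonneg t' (hsub ht')
  have hFMinv : ∀ t ∈ Icc (S.a i) (S.b i), ρ * Fs * S.MInv i ≤ S.F i u v t := fun t ht =>
    le_trans (mul_le_mul_of_nonneg_left (hMInv t ht) (mul_nonneg hρ.le hFs0))
      (hFlow t (hsub ht))
  -- facts about the measures B i j
  haveI : IsFiniteMeasure (S.B i 0) := S.B_fin i 0
  haveI : IsFiniteMeasure (S.B i 1) := S.B_fin i 1
  have hBae : ∀ j : Fin 2, ∀ᵐ t ∂(S.B i j), t ∈ Icc (0:ℝ) 1 := by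
    intro j
    rw [Filter.Eventually]
    exact mem_ae_iff.2 (S.B_supp i j)
  have hγsup : ∀ l : Fin 2, ∀ t ∈ Icc (0:ℝ) 1, S.γ i l t ≤ supN (S.γ i l) :=
    fun l t ht => le_supN (S.γ_cont i l) ht
  have hγsup0 : ∀ l : Fin 2, 0 ≤ supN (S.γ i l) := fun l =>
    le_trans (S.γ_nonneg i l 0 (by norm_num)) (hγsup l 0 (by norm_num))
  have hγInt : ∀ j l : Fin 2, Integrable (S.γ i l) (S.B i j) := by
    intro j l
    haveI := S.B_fin i j
    refine integrable_of_B (hBae j) (S.γ_cont i l) (Cw := supN (S.γ i l)) ?_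
    intro t ht
    rw [abs_of_nonneg (S.γ_nonneg i l t ht)]
    exact hγsup l t ht
  have hβγnn : ∀ j l : Fin 2, 0 ≤ S.β i j (S.γ i l) := fun j l =>
    integral_nonneg_of_ae (by filter_upwards [hBae j] with t ht using S.γ_nonneg i l t ht)
  have hwInt : ∀ j : Fin 2, Integrable w (S.B i j) := by
    intro j
    haveI := S.B_fin i j
    refine integrable_of_B (hBae j) hwcont (Cw := ρ / S.cc) ?_
    intro t ht
    rw [abs_of_nonneg (hw0 t ht)]
    exact hwb t ht
  have hXnn : ∀ j : Fin 2, 0 ≤ S.β i j w := fun j =>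
    integral_nonneg_of_ae (by filter_upwards [hBae j] with t ht using hw0 t ht)
  -- boundedness and measurability of J, and its integral via Fubini
  have hPmeas : Measurable (fun p : ℝ × ℝ => S.k i p.1 p.2 * S.g i p.2) :=
    (S.k_meas i).mul (hgmeas.comp measurable_snd)
  have hJsm : StronglyMeasurable J := by
    rw [hJdef]
    exact hPmeas.stronglyMeasurable.integral_prod_right'
  set CJ := ∫ s in Icc (0:ℝ) 1, |S.g i s * S.Φ i s| with hCJ
  have hkΦab : ∀ t ∈ Icc (0:ℝ) 1, ∀ᵐ s ∂(volume.restrict (Icc (S.a i) (S.b i))),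
      0 ≤ S.k i t s ∧ S.k i t s ≤ S.Φ i s ∧ 0 ≤ S.g i s := by
    intro t ht
    filter_upwards [ae_restrict_of_ae_restrict_of_subset hsub (S.k_le i t ht), hg0ab,
      ae_restrict_mem measurableSet_Icc] with s h1 h2 hs
    exact ⟨S.k_nonneg i t ht s (hsub hs), h1, h2⟩
  have hJbd : ∀ t ∈ Icc (0:ℝ) 1, |J t| ≤ CJ := by
    intro t ht
    rw [abs_of_nonneg (hJnonneg t ht)]
    have h1 : J t ≤ ∫ s in Icc (S.a i) (S.b i), |S.g i s * S.Φ i s| := by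
      refine integral_mono_ae ((hIntkg t ht).mono_set hsub)
        (((S.gΦ_int i).mono_set hsub).abs) ?_
      filter_upwards [hkΦab t ht] with s hs
      obtain ⟨h2, h3, h4⟩ := hs
      have hΦ0 : 0 ≤ S.Φ i s := h2.trans h3
      rw [abs_of_nonneg (mul_nonneg h4 hΦ0), mul_comm (S.g i s)]
      exact mul_le_mul_of_nonneg_right h3 h4
    have h2 : ∫ s in Icc (S.a i) (S.b i), |S.g i s * S.Φ i s| ≤ CJ :=
      setIntegral_mono_set ((S.gΦ_int i).abs) (ae_of_all _ fun s => abs_nonneg _)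
        (HasSubset.Subset.eventuallyLE hsub)
    linarith
  have hJInt : ∀ j : Fin 2, Integrable J (S.B i j) := by
    intro j
    haveI := S.B_fin i j
    refine ⟨hJsm.aestronglyMeasurable, HasFiniteIntegral.of_bounded (C := CJ) ?_⟩
    filter_upwards [hBae j] with t ht
    simpa [Real.norm_eq_abs] using hJbd t ht
  have hswap : ∀ j : Fin 2, ∫ t, J t ∂(S.B i j)
      = ∫ s in Icc (S.a i) (S.b i), S.KK i j s * S.g i s := by
    intro j
    haveI := S.B_fin i j
    have hPint : Integrable (Function.uncurry (fun t s => S.k i t s * S.g i s))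
        ((S.B i j).prod (volume.restrict (Icc (S.a i) (S.b i)))) := by
      refine ⟨hPmeas.aestronglyMeasurable, ?_⟩
      show (∫⁻ p : ℝ × ℝ, (‖S.k i p.1 p.2 * S.g i p.2‖₊ : ℝ≥0∞)
        ∂((S.B i j).prod (volume.restrict (Icc (S.a i) (S.b i))))) < ⊤
      rw [lintegral_prod _ hPmeas.nnnorm.coe_nnreal_ennreal.aemeasurable]
      have hinner : ∀ᵐ t ∂(S.B i j),
          ∫⁻ s, ‖S.k i t s * S.g i s‖₊ ∂(volume.restrict (Icc (S.a i) (S.b i)))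
            ≤ ∫⁻ s, ‖S.g i s * S.Φ i s‖₊ ∂ν := by
        filter_upwards [hBae j] with t ht
        have hstep : ∫⁻ s, ‖S.k i t s * S.g i s‖₊ ∂(volume.restrict (Icc (S.a i) (S.b i)))
            ≤ ∫⁻ s, ‖S.g i s * S.Φ i s‖₊ ∂(volume.restrict (Icc (S.a i) (S.b i))) := by
          refine lintegral_mono_ae ?_
          filter_upwards [hkΦab t ht] with s hs
          obtain ⟨h2, h3, h4⟩ := hs
          have habs : |S.k i t s * S.g i s| ≤ |S.g i s * S.Φ i s| := by
            have hΦ0 : 0 ≤ S.Φ i s := h2.trans h3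
            rw [abs_of_nonneg (mul_nonneg h2 h4), abs_of_nonneg (mul_nonneg h4 hΦ0),
              mul_comm (S.g i s)]
            exact mul_le_mul_of_nonneg_right h3 h4
          exact ENNReal.coe_le_coe.2 (by
            rw [← NNReal.coe_le_coe, coe_nnnorm, coe_nnnorm, Real.norm_eq_abs,
              Real.norm_eq_abs]
            exact habs)
        exact hstep.trans (lintegral_mono' (Measure.restrict_mono hsub le_rfl) le_rfl)
      calc ∫⁻ t, (∫⁻ s, ‖S.k i t s * S.g i s‖₊
            ∂(volume.restrict (Icc (S.a i) (S.b i)))) ∂(S.B i j)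
          ≤ ∫⁻ _, (∫⁻ s, ‖S.g i s * S.Φ i s‖₊ ∂ν) ∂(S.B i j) := lintegral_mono_ae hinner
        _ = (∫⁻ s, ‖S.g i s * S.Φ i s‖₊ ∂ν) * (S.B i j) univ := lintegral_const _
        _ < ⊤ := ENNReal.mul_lt_top (S.gΦ_int i).2 (measure_lt_top _ _)
    have hsw := integral_integral_swap hPint
    rw [hJdef]
    refine hsw.trans ?_
    refine integral_congr_ae (ae_of_all _ fun s => ?_)
    exact integral_mul_const _ _
  -- lower bound for the functionals applied to w
  have hptwise : ∀ t ∈ Icc (0:ℝ) 1,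
      S.γ i 0 t * (S.h1 i 0 * S.β i 0 w) + S.γ i 1 t * (S.h1 i 1 * S.β i 1 w)
        + ρ * Fs * J t ≤ w t := by
    intro t ht
    rw [heq t ht]
    have hH0 : S.h1 i 0 * S.β i 0 w ≤ S.H i 0 (S.β i 0 w) + r 0 :=
      le_trans (S.H_bound_lower i 0 _ (hXnn 0)) (by linarith [hr 0])
    have hH1 : S.h1 i 1 * S.β i 1 w ≤ S.H i 1 (S.β i 1 w) + r 1 :=
      le_trans (S.H_bound_lower i 1 _ (hXnn 1)) (by linarith [hr 1])
    have hγ0 := S.γ_nonneg i 0 t ht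
    have hγ1 := S.γ_nonneg i 1 t ht
    have hF := hFlow t ht
    nlinarith [mul_le_mul_of_nonneg_left hH0 hγ0, mul_le_mul_of_nonneg_left hH1 hγ1]
  have hxge : ∀ j : Fin 2,
      S.β i j (S.γ i 0) * (S.h1 i 0 * S.β i 0 w) + S.β i j (S.γ i 1) * (S.h1 i 1 * S.β i 1 w)
        + ρ * Fs * (∫ s in Icc (S.a i) (S.b i), S.KK i j s * S.g i s) ≤ S.β i j w := by
    intro j
    haveI := S.B_fin i j
    have hL1 : Integrable (fun t => S.γ i 0 t * (S.h1 i 0 * S.β i 0 w)) (S.B i j) :=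
      (hγInt j 0).mul_const _
    have hL2 : Integrable (fun t => S.γ i 1 t * (S.h1 i 1 * S.β i 1 w)) (S.B i j) :=
      (hγInt j 1).mul_const _
    have hL12 : Integrable (fun t => S.γ i 0 t * (S.h1 i 0 * S.β i 0 w)
        + S.γ i 1 t * (S.h1 i 1 * S.β i 1 w)) (S.B i j) := hL1.add hL2
    have hL3 : Integrable (fun t => ρ * Fs * J t) (S.B i j) := (hJInt j).const_mul _
    have hL : Integrable (fun t => S.γ i 0 t * (S.h1 i 0 * S.β i 0 w)
        + S.γ i 1 t * (S.h1 i 1 * S.β i 1 w) + ρ * Fs * J t) (S.B i j) := hL12.add hL3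
    have h1 := integral_mono_ae hL (hwInt j)
      (by filter_upwards [hBae j] with t ht using hptwise t ht)
    rw [integral_add hL12 hL3, integral_add hL1 hL2,
      integral_mul_const, integral_mul_const, integral_const_mul, hswap j] at h1
    exact h1
  -- the linear system
  have h12 : ∀ l : Fin 2, S.h1 i l ≤ S.h2 i l := by
    intro l
    have h1 := S.H_bound_lower i l 1 zero_le_one
    have h2 := S.H_bound_upper i l 1 zero_le_one
    linarith
  have hdiag0 : S.h2 i 0 * S.β i 0 (S.γ i 0) < 1 := S.hβγ i 0
  have hdiag1 : S.h2 i 1 * S.β i 1 (S.γ i 1) < 1 := S.hβγ i 1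
  have hd0 : S.h1 i 0 * S.β i 0 (S.γ i 0) < 1 :=
    lt_of_le_of_lt (mul_le_mul_of_nonneg_right (h12 0) (hβγnn 0 0)) hdiag0
  have hd1 : S.h1 i 1 * S.β i 1 (S.γ i 1) < 1 :=
    lt_of_le_of_lt (mul_le_mul_of_nonneg_right (h12 1) (hβγnn 1 1)) hdiag1
  have hDpos : (0:ℝ) < (1 - S.h2 i 0 * S.β i 0 (S.γ i 0)) * (1 - S.h2 i 1 * S.β i 1 (S.γ i 1))
      - S.h2 i 0 * S.h2 i 1 * S.β i 0 (S.γ i 1) * S.β i 1 (S.γ i 0) := S.D_pos i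
  have hDl_pos : 0 < S.Dl i := by
    rw [Setup.Dl]
    exact Dl_pos_alg (h12 0) (h12 1) (S.h1_nonneg i 1) (S.h2_nonneg i 0)
      (hβγnn 0 0) (hβγnn 0 1) (hβγnn 1 0) (hβγnn 1 1) hdiag0 hdiag1 hDpos
  have hDlne : S.Dl i ≠ 0 := ne_of_gt hDl_pos
  -- solve the system
  have hA0 := hxge 0
  have hA1 := hxge 1
  set A0 := ρ * Fs * (∫ s in Icc (S.a i) (S.b i), S.KK i 0 s * S.g i s) with hA0def
  set A1 := ρ * Fs * (∫ s in Icc (S.a i) (S.b i), S.KK i 1 s * S.g i s) with hA1def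
  have hsol0 : (1 - S.h1 i 1 * S.β i 1 (S.γ i 1)) * A0
      + S.h1 i 1 * S.β i 0 (S.γ i 1) * A1 ≤ S.Dl i * S.β i 0 w := by
    rw [Setup.Dl]
    exact lin_solve0 hA0 hA1 (hβγnn 0 1) (S.h1_nonneg i 1) hd1
  have hsol1 : S.h1 i 0 * S.β i 1 (S.γ i 0) * A0
      + (1 - S.h1 i 0 * S.β i 0 (S.γ i 0)) * A1 ≤ S.Dl i * S.β i 1 w := by
    rw [Setup.Dl]
    exact lin_solve1 hA0 hA1 (hβγnn 1 0) (S.h1_nonneg i 0) hd0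
  -- the final pointwise lower bound
  set K0 := S.cγ i 0 * supN (S.γ i 0) * S.h1 i 0 with hK0def
  set K1 := S.cγ i 1 * supN (S.γ i 1) * S.h1 i 1 with hK1def
  have hK00 : 0 ≤ K0 :=
    mul_nonneg (mul_nonneg (S.cγ_mem i 0).1.le (hγsup0 0)) (S.h1_nonneg i 0)
  have hK10 : 0 ≤ K1 :=
    mul_nonneg (mul_nonneg (S.cγ_mem i 1).1.le (hγsup0 1)) (S.h1_nonneg i 1)
  have hid : ρ * (Fs * S.Ψ i) * S.Dl i
      = K0 * ((1 - S.h1 i 1 * S.β i 1 (S.γ i 1)) * A0 + S.h1 i 1 * S.β i 0 (S.γ i 1) * A1)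
        + K1 * (S.h1 i 0 * S.β i 1 (S.γ i 0) * A0 + (1 - S.h1 i 0 * S.β i 0 (S.γ i 0)) * A1)
        + ρ * Fs * S.MInv i * S.Dl i := by
    rw [Setup.Ψ, hA0def, hA1def, hK0def, hK1def]
    exact psi_id _ _ _ _ _ _ _ _ _ _ _ _ _ _ _ _ hDlne
  have hwt : ∀ t ∈ Icc (S.a i) (S.b i), ρ * (Fs * S.Ψ i) ≤ w t := by
    intro t ht
    have ht' := hsub ht
    rw [heq t ht']
    have hH0 : S.h1 i 0 * S.β i 0 w ≤ S.H i 0 (S.β i 0 w) + r 0 :=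
      le_trans (S.H_bound_lower i 0 _ (hXnn 0)) (by linarith [hr 0])
    have hH1 : S.h1 i 1 * S.β i 1 w ≤ S.H i 1 (S.β i 1 w) + r 1 :=
      le_trans (S.H_bound_lower i 1 _ (hXnn 1)) (by linarith [hr 1])
    have hγ0 := S.γ_nonneg i 0 t ht'
    have hγ1 := S.γ_nonneg i 1 t ht'
    have hγge0 := S.γ_ge i 0 t ht
    have hγge1 := S.γ_ge i 1 t ht
    have step0 : K0 * S.β i 0 w ≤ S.γ i 0 t * (S.H i 0 (S.β i 0 w) + r 0) := by
      have a1 : 0 ≤ S.h1 i 0 * S.β i 0 w := mul_nonneg (S.h1_nonneg i 0) (hXnn 0)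
      calc K0 * S.β i 0 w = (S.cγ i 0 * supN (S.γ i 0)) * (S.h1 i 0 * S.β i 0 w) := by
            rw [hK0def]; ring
        _ ≤ S.γ i 0 t * (S.h1 i 0 * S.β i 0 w) := mul_le_mul_of_nonneg_right hγge0 a1
        _ ≤ S.γ i 0 t * (S.H i 0 (S.β i 0 w) + r 0) := mul_le_mul_of_nonneg_left hH0 hγ0
    have step1 : K1 * S.β i 1 w ≤ S.γ i 1 t * (S.H i 1 (S.β i 1 w) + r 1) := by
      have a1 : 0 ≤ S.h1 i 1 * S.β i 1 w := mul_nonneg (S.h1_nonneg i 1) (hXnn 1)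
      calc K1 * S.β i 1 w = (S.cγ i 1 * supN (S.γ i 1)) * (S.h1 i 1 * S.β i 1 w) := by
            rw [hK1def]; ring
        _ ≤ S.γ i 1 t * (S.h1 i 1 * S.β i 1 w) := mul_le_mul_of_nonneg_right hγge1 a1
        _ ≤ S.γ i 1 t * (S.H i 1 (S.β i 1 w) + r 1) := mul_le_mul_of_nonneg_left hH1 hγ1
    have hF := hFMinv t ht
    have hmain : ρ * (Fs * S.Ψ i) ≤ K0 * S.β i 0 w + K1 * S.β i 1 w + ρ * Fs * S.MInv i :=
      final_step hK00 hK10 hsol0 hsol1 hDl_pos hid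
    linarith
  -- conclude
  have hρlt : ρ < ρ * (Fs * S.Ψ i) := by
    have h := mul_lt_mul_of_pos_left hstar hρ
    rwa [mul_one] at h
  have hmin : ρ * (Fs * S.Ψ i) ≤ minOnIcc w (S.a i) (S.b i) := by
    refine le_csInf ((nonempty_Icc.2 hab).image w) ?_
    rintro y ⟨t, ht, rfl⟩
    exact hwt t ht
  linarith


end Aux

/-- Under condition `(I⁰_ρ)*`, for every `(u,v)` in the boundary of `V_ρ` relative to `K`
and every `μ ≥ 0`, one has `(u,v) ≠ T(u,v) + μ(e,e)` where `e ≡ 1`. -/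
theorem no_translate_fixed_point_on_boundary_Vrho_star (S : Setup) (ρ : ℝ) (hρ : 0 < ρ)
    (hI0star : S.CondI0Star ρ) (u v : ℝ → ℝ) (huv : S.inK u v)
    (hu_le : minOnIcc u (S.a 0) (S.b 0) ≤ ρ) (hv_le : minOnIcc v (S.a 1) (S.b 1) ≤ ρ)
    (hbd : minOnIcc u (S.a 0) (S.b 0) = ρ ∨ minOnIcc v (S.a 1) (S.b 1) = ρ)
    (μ : ℝ) (hμ : 0 ≤ μ) :
    ¬ ∀ t ∈ Icc (0:ℝ) 1, u t = S.T1 u v t + μ ∧ v t = S.T2 u v t + μ := by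
  intro hcontra
  obtain ⟨hucont, hvcont, hu0, hv0, hmu, hmv⟩ := huv
  have hccpos : 0 < S.cc := cc_pos S
  -- upper bounds u, v ≤ ρ / cc on [0,1]
  have hub : ∀ t ∈ Icc (0:ℝ) 1, u t ≤ ρ / S.cc := by
    intro t ht
    have h1 : u t ≤ supN u := le_supN hucont ht
    have hct : 0 < S.ctilde 0 := lt_of_lt_of_le hccpos (ctilde_ge_cc S 0)
    have h2 : supN u ≤ ρ / S.ctilde 0 := by
      rw [le_div_iff₀ hct]
      nlinarith [hmu, hu_le]
    have h3 : ρ / S.ctilde 0 ≤ ρ / S.cc :=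
      div_le_div_of_nonneg_left hρ.le hccpos (ctilde_ge_cc S 0)
    linarith
  have hvb : ∀ t ∈ Icc (0:ℝ) 1, v t ≤ ρ / S.cc := by
    intro t ht
    have h1 : v t ≤ supN v := le_supN hvcont ht
    have hct : 0 < S.ctilde 1 := lt_of_lt_of_le hccpos (ctilde_ge_cc S 1)
    have h2 : supN v ≤ ρ / S.ctilde 1 := by
      rw [le_div_iff₀ hct]
      nlinarith [hmv, hv_le]
    have h3 : ρ / S.ctilde 1 ≤ ρ / S.cc :=
      div_le_div_of_nonneg_left hρ.le hccpos (ctilde_ge_cc S 1)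
    linarith
  -- the δ functionals are nonnegative
  have hδu : ∀ j l : Fin 2, 0 ≤ S.δ j l u := by
    intro j l
    have hC : ∀ᵐ t ∂(S.C j l), t ∈ Icc (0:ℝ) 1 := by
      rw [Filter.Eventually]
      exact mem_ae_iff.2 (S.C_supp j l)
    exact integral_nonneg_of_ae (by filter_upwards [hC] with t ht using hu0 t ht)
  have hδv : ∀ j l : Fin 2, 0 ≤ S.δ j l v := by
    intro j l
    have hC : ∀ᵐ t ∂(S.C j l), t ∈ Icc (0:ℝ) 1 := by
      rw [Filter.Eventually]
      exact mem_ae_iff.2 (S.C_supp j l)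
    exact integral_nonneg_of_ae (by filter_upwards [hC] with t ht using hv0 t ht)
  obtain ⟨i, hi⟩ := hI0star
  fin_cases i
  · -- i = 0 : use the equation for u
    have hkey := key_lemma S 0 ρ hρ hi u v u (Or.inl rfl) hucont hvcont hu0 hv0 hub hvb
      (fun l => S.L 0 l (S.δ 0 l v)) (fun l => S.L_nonneg 0 l _ (hδv 0 l)) μ hμ ?_
    · exact absurd hu_le (not_le.2 hkey)
    · intro t ht
      have := (hcontra t ht).1
      rw [this, Setup.T1]
  · -- i = 1 : use the equation for v
    have hkey := key_lemma S 1 ρ hρ hi u v v (Or.inr rfl) hucont hvcont hu0 hv0 hub hvb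
      (fun l => S.L 1 l (S.δ 1 l u)) (fun l => S.L_nonneg 1 l _ (hδu 1 l)) μ hμ ?_
    · exact absurd hv_le (not_le.2 hkey)
    · intro t ht
      have := (hcontra t ht).2
      rw [this, Setup.T2]
      ring
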